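/- Let R > 0, let h : ℝ → ℝ be continuous, and let u : ℝ → ℝ satisfy HasDerivAt u ((R² − (u t)²) * h t) t for all t ≥ 0. If |u 0| < R, then |u t| < R for all t ≥ 0. -/

import Mathlib

theorem confined_interior_invariance (R : ℝ) (hR : 0 < R)
    (h : ℝ → ℝ) (hcont : Continuous h)
    (u : ℝ → ℝ)
    (hu : ∀ t : ℝ, 0 ≤ t → HasDerivAt u ((R ^ 2 - (u t) ^ 2) * h t) t)
    (h0 : |u 0| < R) :
    ∀ t : ℝ, 0 ≤ t → |u t| < R := by
  by_contra hcon
  push_neg at hcon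
  obtain ⟨t, ht, habs⟩ := hcon
  set w : ℝ → ℝ := fun s => R ^ 2 - (u s) ^ 2 with hwdef
  -- u is continuous on Ici 0
  have hucont : ContinuousOn u (Set.Ici 0) := fun s hs =>
    ((hu s hs).continuousAt).continuousWithinAt
  have hwcont : ContinuousOn w (Set.Ici 0) := by
    apply ContinuousOn.sub continuousOn_const
    exact hucont.pow 2
  -- derivative of w
  have hw' : ∀ τ : ℝ, 0 ≤ τ →
      HasDerivAt w (-(2 * u τ * h τ) * w τ) τ := by
    intro τ hτ
    have h1 : HasDerivAt (fun s => (u s) ^ 2)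
        ((2 : ℕ) * (u τ) ^ 1 * ((R ^ 2 - (u τ) ^ 2) * h τ)) τ := (hu τ hτ).pow 2
    have h2 := h1.const_sub (R ^ 2)
    refine h2.congr_deriv ?_
    simp only [hwdef]
    push_cast
    ring
  have hw0 : 0 < w 0 := by
    have := abs_lt.mp h0
    simp only [hwdef]
    nlinarith [this.1, this.2]
  have hwt : w t ≤ 0 := by
    have : R ^ 2 ≤ |u t| ^ 2 := pow_le_pow_left₀ hR.le habs 2
    rw [sq_abs] at this
    simp only [hwdef]; linarith
  -- IVT: some T in [0,t] with w T = 0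
  have hsub : Set.Icc 0 t ⊆ Set.Ici (0:ℝ) := Set.Icc_subset_Ici_self
  have hivt := intermediate_value_Icc' ht (hwcont.mono hsub)
  have h0mem : (0:ℝ) ∈ Set.Icc (w t) (w 0) := ⟨hwt, hw0.le⟩
  obtain ⟨T, hTmem, hTz⟩ := hivt h0mem
  obtain ⟨hT0, hTt⟩ := hTmem
  -- bound on coefficient
  have hgc : ContinuousOn (fun τ => -(2 * u τ * h τ)) (Set.Icc 0 T) := by
    apply ContinuousOn.neg
    apply ContinuousOn.mul _ (hcont.continuousOn)
    exact (continuousOn_const.mul (hucont.mono Set.Icc_subset_Ici_self))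
  obtain ⟨K, hK⟩ := isCompact_Icc.exists_bound_of_continuousOn hgc
  -- time-reversed function f s = w (T - s)
  set f : ℝ → ℝ := fun s => w (T - s) with hfdef
  have hTs : ∀ s ∈ Set.Icc (0:ℝ) T, T - s ∈ Set.Icc (0:ℝ) T := by
    intro s hs
    exact ⟨by linarith [hs.2], by linarith [hs.1]⟩
  have hfc : ContinuousOn f (Set.Icc 0 T) := by
    apply ContinuousOn.comp (hwcont.mono Set.Icc_subset_Ici_self)
      (continuousOn_const.sub continuousOn_id) hTs
  have hfd : ∀ s ∈ Set.Ico (0:ℝ) T,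
      HasDerivWithinAt f ((2 * u (T - s) * h (T - s)) * w (T - s)) (Set.Ici s) s := by
    intro s hs
    have hτ : (0:ℝ) ≤ T - s := by linarith [hs.2]
    have hinner : HasDerivAt (fun s : ℝ => T - s) (-1) s := by
      simpa using (hasDerivAt_id s).const_sub T
    have := (hw' (T - s) hτ).comp s hinner
    have h2 : HasDerivAt f ((2 * u (T - s) * h (T - s)) * w (T - s)) s := by
      refine this.congr_deriv ?_
      ring
    exact h2.hasDerivWithinAt
  have hbound : ∀ s ∈ Set.Ico (0:ℝ) T,
      ‖(2 * u (T - s) * h (T - s)) * w (T - s)‖ ≤ K * ‖f s‖ + 0 := by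
    intro s hs
    have hmem : T - s ∈ Set.Icc (0:ℝ) T := hTs s ⟨hs.1, hs.2.le⟩
    have := hK (T - s) hmem
    rw [norm_mul]
    have hfs : ‖f s‖ = ‖w (T - s)‖ := rfl
    rw [hfs]
    have h1 : ‖2 * u (T - s) * h (T - s)‖ = ‖-(2 * u (T - s) * h (T - s))‖ := (norm_neg _).symm
    rw [h1]
    have hnn : (0:ℝ) ≤ ‖w (T - s)‖ := norm_nonneg _
    nlinarith
  have hfa : ‖f 0‖ ≤ 0 := by
    simp only [hfdef, sub_zero]
    simp [hTz]
  have := norm_le_gronwallBound_of_norm_deriv_right_le hfc hfd hfa hbound T ⟨hT0, le_refl T⟩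
  rw [gronwallBound_ε0] at this
  simp only [hfdef, sub_self, zero_mul] at this
  have : |w 0| ≤ 0 := by simpa using this
  have := abs_nonneg (w 0)
  have : w 0 = 0 := by
    have h' : |w 0| = 0 := le_antisymm ‹|w 0| ≤ 0› this
    exact abs_eq_zero.mp h'
  linarith
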